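/- arXiv:2206.02276 — 2 statements merged into one kernel-verified Lean document; each statement's English description precedes it below -/
import Mathlib

section
/- Stanley's transfer map φ: O(P) → C(P), defined by φ(f)(p) = f(p) if p is minimal and φ(f)(p) = f(p) − max{f(q) : q < p} otherwise, is a bijection from the order polytope to the chain polytope of a finite poset P, with inverse φ⁻¹(f)(p) = max over chains p_1 < ... < p_k = p of f(p_1) + ... + f(p_k); moreover φ restricts to a bijection between O(P) ∩ (1/t)Z^P and C(P) ∩ (1/t)Z^P for every integer t ≥ 1. -/
open scoped BigOperators

variable {P : Type*} [PartialOrder P] [Fintype P]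

/-- The order polytope `O(P)`: monotone functions `P → ℝ` with values in `[0,1]`. -/
def orderPolytope (P : Type*) [PartialOrder P] : Set (P → ℝ) :=
  {f | (∀ p, 0 ≤ f p ∧ f p ≤ 1) ∧ ∀ p q, p ≤ q → f p ≤ f q}

/-- The chain polytope `C(P)`: nonnegative functions whose sums along strict chains
are at most `1`. -/
def chainPolytope (P : Type*) [PartialOrder P] : Set (P → ℝ) :=
  {f | (∀ p, 0 ≤ f p) ∧
    ∀ l : List P, l.Chain' (· < ·) → (l.map f).sum ≤ 1}

open scoped Classical in
/-- Stanley's transfer map `φ : O(P) → C(P)`: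
`φ(f)(p) = f(p)` for `p` minimal, and `f(p) − max{f(q) : q < p}` otherwise. -/
noncomputable def transferMap (P : Type*) [PartialOrder P] [Fintype P]
    (f : P → ℝ) (p : P) : ℝ :=
  if h : (Finset.univ.filter (fun q => q < p)).Nonempty then
    f p - (Finset.univ.filter (fun q => q < p)).sup' h f
  else f p

/-- The inverse transfer map `φ⁻¹ : C(P) → O(P)`:
`φ⁻¹(f)(p) = max { f(p₁) + ⋯ + f(p_k) : chains p₁ < ⋯ < p_k = p }`. -/
noncomputable def transferMapInv (P : Type*) [PartialOrder P]
    (f : P → ℝ) (p : P) : ℝ :=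
  sSup {s : ℝ | ∃ l : List P, l.Chain' (· < ·) ∧ l.getLast? = some p ∧
    s = (l.map f).sum}

/-- A function with all values in `(1/t)ℤ`. -/
def IsFracFn (P : Type*) (t : ℕ) (f : P → ℝ) : Prop :=
  ∀ p, ∃ m : ℤ, f p = (m : ℝ) / t

/-! ### Auxiliary lemmas -/

open scoped Classical

namespace StanleyAux

/-- The set of chain sums ending at `p`. -/
def chainSums (g : P → ℝ) (p : P) : Set ℝ :=
  {s : ℝ | ∃ l : List P, l.Chain' (· < ·) ∧ l.getLast? = some p ∧
    s = (l.map g).sum}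

lemma transferMapInv_eq_sSup (g : P → ℝ) (p : P) :
    transferMapInv P g p = sSup (chainSums g p) := rfl

lemma self_mem_chainSums (g : P → ℝ) (p : P) : g p ∈ chainSums g p :=
  ⟨[p], List.isChain_singleton p, rfl, by simp⟩

lemma chainSums_nonempty (g : P → ℝ) (p : P) : (chainSums g p).Nonempty :=
  ⟨g p, self_mem_chainSums g p⟩

lemma chainSums_le_one {g : P → ℝ} (hg : g ∈ chainPolytope P) (p : P) :
    ∀ s ∈ chainSums g p, s ≤ 1 := by
  rintro s ⟨l, hl, -, rfl⟩
  exact hg.2 l hl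

lemma bddAbove_chainSums {g : P → ℝ} (hg : g ∈ chainPolytope P) (p : P) :
    BddAbove (chainSums g p) :=
  ⟨1, fun s hs => chainSums_le_one hg p s hs⟩

lemma extend_chainSums {g : P → ℝ} {q p : P} (hqp : q < p) {s : ℝ}
    (hs : s ∈ chainSums g q) : s + g p ∈ chainSums g p := by
  obtain ⟨l, hl, hlast, rfl⟩ := hs
  refine ⟨l ++ [p], ?_, List.getLast?_concat, by simp⟩
  simp only [List.Chain']
  rw [List.isChain_append]
  refine ⟨hl, List.isChain_singleton p, ?_⟩
  intro x hx y hy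
  simp only [List.head?_cons, Option.mem_def, Option.some.injEq] at hy
  subst hy
  rw [hlast] at hx
  simp only [Option.mem_def, Option.some.injEq] at hx
  subst hx
  exact hqp

lemma decompose_chainSums {g : P → ℝ} {p : P} {s : ℝ} (hs : s ∈ chainSums g p) :
    s = g p ∨ ∃ q, q < p ∧ s - g p ∈ chainSums g q := by
  obtain ⟨l, hl, hlast, rfl⟩ := hs
  have hdecomp : l.dropLast ++ [p] = l := List.dropLast_append_getLast? p hlast
  rcases eq_or_ne l.dropLast [] with h0 | h0
  · left
    rw [← hdecomp, h0]; simp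
  · right
    set l' := l.dropLast with hl'def
    have hlast' : l'.getLast? = some (l'.getLast h0) :=
      List.getLast?_eq_getLast_of_ne_nil h0
    have hchain : (l' ++ [p]).Chain' (· < ·) := by rw [hdecomp]; exact hl
    simp only [List.Chain'] at hchain
    rw [List.isChain_append] at hchain
    have hlt : l'.getLast h0 < p := by
      refine hchain.2.2 _ ?_ p ?_
      · rw [hlast']; rfl
      · rfl
    have hsum : (l.map g).sum = (l'.map g).sum + g p := by
      conv_lhs => rw [← hdecomp]
      simp
    exact ⟨l'.getLast h0, hlt, l', hchain.1, hlast', by rw [hsum]; ring⟩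

/-! ### The transfer map lands in the chain polytope -/

lemma transferMap_le_self {f : P → ℝ} (h0 : ∀ p, 0 ≤ f p) (p : P) :
    transferMap P f p ≤ f p := by
  unfold transferMap
  split
  · next h =>
      obtain ⟨q, hq⟩ := id h
      have h1 : f q ≤ (Finset.univ.filter (fun r => r < p)).sup' h f :=
        Finset.le_sup' f hq
      have h2 := h0 q
      linarith
  · exact le_rfl

lemma transferMap_le_sub (f : P → ℝ) {q p : P} (hqp : q < p) :
    transferMap P f p ≤ f p - f q := by
  have hq : q ∈ Finset.univ.filter (fun r => r < p) := by
    simp [hqp]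
  have hne : (Finset.univ.filter (fun r => r < p)).Nonempty := ⟨q, hq⟩
  unfold transferMap
  rw [dif_pos hne]
  have := Finset.le_sup' f hq
  linarith

lemma transferMap_nonneg {f : P → ℝ} (hf : f ∈ orderPolytope P) (p : P) :
    0 ≤ transferMap P f p := by
  unfold transferMap
  split
  · next h =>
      have : (Finset.univ.filter (fun r => r < p)).sup' h f ≤ f p := by
        refine Finset.sup'_le h f fun q hq => ?_
        simp only [Finset.mem_filter] at hq
        exact hf.2 q p hq.2.le
      linarith
  · exact (hf.1 p).1

lemma chain_sum_transferMap_le {f : P → ℝ} (hf : f ∈ orderPolytope P) :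
    ∀ l : List P, l.Chain' (· < ·) → ∀ q, l.getLast? = some q →
      (l.map (transferMap P f)).sum ≤ f q := by
  intro l
  induction l using List.reverseRecOn with
  | nil => intro _ q hq; simp at hq
  | append_singleton l p ih =>
    intro hchain q hq
    rw [List.getLast?_concat] at hq
    obtain rfl : p = q := by injection hq
    simp only [List.Chain'] at hchain
    rw [List.isChain_append] at hchain
    rcases eq_or_ne l [] with rfl | h0
    · simpa using transferMap_le_self (fun r => (hf.1 r).1) p
    · have hlast : l.getLast? = some (l.getLast h0) :=
        List.getLast?_eq_getLast_of_ne_nil h0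
      have hlt : l.getLast h0 < p := by
        refine hchain.2.2 _ ?_ p ?_
        · rw [hlast]; rfl
        · rfl
      have h1 := ih hchain.1 _ hlast
      have h2 := transferMap_le_sub f hlt
      have hsum : ((l ++ [p]).map (transferMap P f)).sum
          = (l.map (transferMap P f)).sum + transferMap P f p := by simp
      rw [hsum]
      linarith

lemma transferMap_mem_chainPolytope {f : P → ℝ} (hf : f ∈ orderPolytope P) :
    transferMap P f ∈ chainPolytope P := by
  refine ⟨transferMap_nonneg hf, fun l hl => ?_⟩
  rcases eq_or_ne l [] with rfl | h0
  · simp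
  · have hlast : l.getLast? = some (l.getLast h0) :=
      List.getLast?_eq_getLast_of_ne_nil h0
    calc (l.map (transferMap P f)).sum ≤ f (l.getLast h0) :=
          chain_sum_transferMap_le hf l hl _ hlast
      _ ≤ 1 := (hf.1 _).2

/-! ### Injectivity -/

lemma transferMap_injOn : Set.InjOn (transferMap P) (orderPolytope P) := by
  intro f _ f' _ heq
  funext p
  induction p using WellFoundedLT.induction with
  | ind p ih =>
    have hp := congrFun heq p
    by_cases h : (Finset.univ.filter (fun q => q < p)).Nonempty
    · have h1 : transferMap P f p
          = f p - (Finset.univ.filter (fun q => q < p)).sup' h f := dif_pos h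
      have h1' : transferMap P f' p
          = f' p - (Finset.univ.filter (fun q => q < p)).sup' h f' := dif_pos h
      have hsup : (Finset.univ.filter (fun q => q < p)).sup' h f
          = (Finset.univ.filter (fun q => q < p)).sup' h f' := by
        refine Finset.sup'_congr h rfl fun q hq => ?_
        simp only [Finset.mem_filter] at hq
        exact ih q hq.2
      rw [h1, h1', hsup] at hp
      linarith
    · have h1 : transferMap P f p = f p := dif_neg h
      have h1' : transferMap P f' p = f' p := dif_neg h
      rw [h1, h1'] at hp
      exact hp

/-! ### The recursion satisfied by the inverse map -/

lemma self_le_transferMapInv {g : P → ℝ} (hg : g ∈ chainPolytope P) (p : P) :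
    g p ≤ transferMapInv P g p :=
  le_csSup (bddAbove_chainSums hg p) (self_mem_chainSums g p)

lemma transferMapInv_spec {g : P → ℝ} (hg : g ∈ chainPolytope P) (p : P) :
    transferMapInv P g p = g p +
      (if h : (Finset.univ.filter (fun q => q < p)).Nonempty
        then (Finset.univ.filter (fun q => q < p)).sup' h (transferMapInv P g)
        else 0) := by
  rw [transferMapInv_eq_sSup]
  apply le_antisymm
  · refine csSup_le (chainSums_nonempty g p) fun s hs => ?_
    rcases decompose_chainSums hs with rfl | ⟨q, hqp, hmem⟩
    · have : (0:ℝ) ≤ (if h : (Finset.univ.filter (fun q => q < p)).Nonempty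
          then (Finset.univ.filter (fun q => q < p)).sup' h (transferMapInv P g)
          else 0) := by
        split
        · next h =>
            obtain ⟨q, hq⟩ := h
            have h1 : transferMapInv P g q
                ≤ (Finset.univ.filter (fun r => r < p)).sup' ⟨q, hq⟩ (transferMapInv P g) :=
              Finset.le_sup' _ hq
            have h2 : (0:ℝ) ≤ g q := hg.1 q
            have h3 := self_le_transferMapInv hg q
            linarith
        · exact le_rfl
      linarith
    · have hq : q ∈ Finset.univ.filter (fun r => r < p) := by simp [hqp]
      have hne : (Finset.univ.filter (fun r => r < p)).Nonempty := ⟨q, hq⟩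
      rw [dif_pos hne]
      have h1 : s - g p ≤ transferMapInv P g q :=
        le_csSup (bddAbove_chainSums hg q) hmem
      have h2 : transferMapInv P g q
          ≤ (Finset.univ.filter (fun r => r < p)).sup' hne (transferMapInv P g) :=
        Finset.le_sup' _ hq
      linarith
  · split
    · next h =>
        obtain ⟨q, hq, hsup⟩ := Finset.exists_mem_eq_sup' h (transferMapInv P g)
        simp only [Finset.mem_filter] at hq
        rw [hsup, transferMapInv_eq_sSup]
        have key : sSup (chainSums g q) ≤ sSup (chainSums g p) - g p := by
          refine csSup_le (chainSums_nonempty g q) fun s hs => ?_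
          have h1 : s + g p ∈ chainSums g p := extend_chainSums hq.2 hs
          have h2 := le_csSup (bddAbove_chainSums hg p) h1
          linarith
        linarith
    · have := le_csSup (bddAbove_chainSums hg p) (self_mem_chainSums g p)
      linarith

/-! ### The inverse lands in the order polytope -/

lemma transferMapInv_mem_orderPolytope {g : P → ℝ} (hg : g ∈ chainPolytope P) :
    transferMapInv P g ∈ orderPolytope P := by
  refine ⟨fun p => ⟨le_trans (hg.1 p) (self_le_transferMapInv hg p), ?_⟩,
    fun p q hpq => ?_⟩
  · exact csSup_le (chainSums_nonempty g p) (chainSums_le_one hg p)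
  · rcases eq_or_lt_of_le hpq with rfl | hlt
    · exact le_rfl
    · rw [transferMapInv_eq_sSup g p, transferMapInv_eq_sSup g q]
      refine csSup_le (chainSums_nonempty g p) fun s hs => ?_
      have h1 : s + g q ∈ chainSums g q := extend_chainSums hlt hs
      have h2 := le_csSup (bddAbove_chainSums hg q) h1
      have h3 := hg.1 q
      linarith

/-! ### Right inverse -/

lemma transferMap_transferMapInv {g : P → ℝ} (hg : g ∈ chainPolytope P) :
    transferMap P (transferMapInv P g) = g := by
  funext p
  unfold transferMap
  split
  · next h =>
      rw [transferMapInv_spec hg p, dif_pos h]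
      ring
  · next h =>
      rw [transferMapInv_spec hg p, dif_neg h]
      ring

/-! ### Left inverse -/

lemma transferMapInv_transferMap {f : P → ℝ} (hf : f ∈ orderPolytope P) :
    transferMapInv P (transferMap P f) = f := by
  have h1 : transferMap P f ∈ chainPolytope P := transferMap_mem_chainPolytope hf
  have h2 : transferMapInv P (transferMap P f) ∈ orderPolytope P :=
    transferMapInv_mem_orderPolytope h1
  exact transferMap_injOn h2 hf (transferMap_transferMapInv h1)

/-! ### Fractional points -/

lemma transferMap_isFracFn {t : ℕ} {f : P → ℝ} (hf : IsFracFn P t f) :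
    IsFracFn P t (transferMap P f) := by
  intro p
  unfold transferMap
  split
  · next h =>
      obtain ⟨q, hq, hsup⟩ := Finset.exists_mem_eq_sup' h f
      obtain ⟨m, hm⟩ := hf p
      obtain ⟨n, hn⟩ := hf q
      exact ⟨m - n, by rw [hsup, hm, hn]; push_cast; ring⟩
  · exact hf p

lemma transferMapInv_isFracFn {t : ℕ} {g : P → ℝ} (hg : g ∈ chainPolytope P)
    (hfr : IsFracFn P t g) : IsFracFn P t (transferMapInv P g) := by
  intro p
  induction p using WellFoundedLT.induction with
  | ind p ih =>
    rw [transferMapInv_spec hg p]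
    split
    · next h =>
        obtain ⟨q, hq, hsup⟩ := Finset.exists_mem_eq_sup' h (transferMapInv P g)
        simp only [Finset.mem_filter] at hq
        obtain ⟨m, hm⟩ := hfr p
        obtain ⟨n, hn⟩ := ih q hq.2
        exact ⟨m + n, by rw [hsup, hm, hn]; push_cast; ring⟩
    · obtain ⟨m, hm⟩ := hfr p
      exact ⟨m, by rw [hm]; ring⟩

end StanleyAux

open StanleyAux in
/-- Stanley's transfer map is a bijection `O(P) → C(P)` with inverse given by maxima
of chain sums, and it restricts to a bijection on `(1/t)ℤ`-valued points for every
integer `t ≥ 1`. -/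
theorem transferMap_bijOn (P : Type*) [PartialOrder P] [Fintype P] :
    Set.BijOn (transferMap P) (orderPolytope P) (chainPolytope P) ∧
    (∀ f ∈ orderPolytope P, transferMapInv P (transferMap P f) = f) ∧
    (∀ f ∈ chainPolytope P, transferMap P (transferMapInv P f) = f) ∧
    ∀ t : ℕ, 1 ≤ t →
      Set.BijOn (transferMap P) (orderPolytope P ∩ {f | IsFracFn P t f})
        (chainPolytope P ∩ {f | IsFracFn P t f}) := by
  refine ⟨⟨fun f hf => transferMap_mem_chainPolytope hf, transferMap_injOn,
    fun g hg => ⟨transferMapInv P g, transferMapInv_mem_orderPolytope hg,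
      transferMap_transferMapInv hg⟩⟩,
    fun f hf => transferMapInv_transferMap hf,
    fun g hg => transferMap_transferMapInv hg,
    fun t _ => ⟨?_, ?_, ?_⟩⟩
  · rintro f ⟨hf, hfr⟩
    exact ⟨transferMap_mem_chainPolytope hf, transferMap_isFracFn hfr⟩
  · exact transferMap_injOn.mono Set.inter_subset_left
  · rintro g ⟨hg, hfr⟩
    exact ⟨transferMapInv P g,
      ⟨transferMapInv_mem_orderPolytope hg, transferMapInv_isFracFn hg hfr⟩,
      transferMap_transferMapInv hg⟩
end

section
/- For n ≥ 3 and any k with 2 ≤ k ≤ n, the polytope B_n^k has dimension n² − 2n + 1 (the same dimension as the full Birkhoff polytope). -/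
open scoped BigOperators

/-- A monotone lattice path in the `n × n` grid from `(0,0)` to `(n-1,n-1)` (0-indexed). -/
def IsLatticePath (n : ℕ) (p : ℕ → ℕ × ℕ) : Prop :=
  p 0 = (0, 0) ∧ p (2 * n - 2) = (n - 1, n - 1) ∧
    ∀ i, i < 2 * n - 2 →
      p (i + 1) = ((p i).1 + 1, (p i).2) ∨ p (i + 1) = ((p i).1, (p i).2 + 1)

/-- Entry of a matrix at a ℕ-indexed position (0 outside the index range). -/
def ent {n : ℕ} (X : Matrix (Fin n) (Fin n) ℝ) (q : ℕ × ℕ) : ℝ :=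
  if h : q.1 < n ∧ q.2 < n then X ⟨q.1, h.1⟩ ⟨q.2, h.2⟩ else 0

/-- Sum of matrix entries along a lattice path. -/
def pathSum {n : ℕ} (X : Matrix (Fin n) (Fin n) ℝ) (p : ℕ → ℕ × ℕ) : ℝ :=
  ∑ i ∈ Finset.range (2 * n - 1), ent X (p i)

/-- Membership in the restricted Birkhoff polytope `B_n^k`. -/
def InRestrictedBirkhoff (n k : ℕ) (X : Matrix (Fin n) (Fin n) ℝ) : Prop :=
  (∀ i j, 0 ≤ X i j) ∧ (∀ i, ∑ j, X i j = 1) ∧ (∀ j, ∑ i, X i j = 1) ∧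
    ∀ p : ℕ → ℕ × ℕ, IsLatticePath n p → pathSum X p ≤ k

/-- A real matrix with all entries integers. -/
def IsIntegerMatrix {n : ℕ} (X : Matrix (Fin n) (Fin n) ℝ) : Prop :=
  ∀ i j, ∃ m : ℤ, X i j = (m : ℝ)

/-! ### Auxiliary material -/

lemma path_coord_sum {n : ℕ} {p : ℕ → ℕ × ℕ} (hp : IsLatticePath n p) :
    ∀ i, i ≤ 2 * n - 2 → (p i).1 + (p i).2 = i := by
  intro i
  induction i with
  | zero => intro _; rw [hp.1]; rfl
  | succ i ih =>
    intro hi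
    have h1 : i < 2 * n - 2 := by omega
    rcases hp.2.2 i h1 with h | h <;> rw [h] <;> simp <;> omega

lemma path_mono {n : ℕ} {p : ℕ → ℕ × ℕ} (hp : IsLatticePath n p) :
    ∀ d i, i + d ≤ 2 * n - 2 → (p i).1 ≤ (p (i + d)).1 ∧ (p i).2 ≤ (p (i + d)).2 := by
  intro d
  induction d with
  | zero => intro i _; simp
  | succ d ih =>
    intro i hi
    have h1 := ih i (by omega)
    have h2 : i + d < 2 * n - 2 := by omega
    have : i + (d + 1) = (i + d) + 1 := by omega
    rw [this]
    rcases hp.2.2 (i + d) h2 with h | h <;> rw [h] <;> simp <;> omega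

lemma path_lt {n : ℕ} {p : ℕ → ℕ × ℕ} (hp : IsLatticePath n p) (hn : 1 ≤ n) :
    ∀ i, i ≤ 2 * n - 2 → (p i).1 < n ∧ (p i).2 < n := by
  intro i hi
  have h := path_mono hp (2 * n - 2 - i) i (by omega)
  rw [show i + (2 * n - 2 - i) = 2 * n - 2 by omega, hp.2.1] at h
  simp at h
  omega

def u (m : ℕ) (a : Fin m) (i : Fin (m+1)) : ℝ :=
  (if i = Fin.castSucc a then 1 else 0) - (if i = Fin.last m then 1 else 0)

def Emat (m : ℕ) (a b : Fin m) : Matrix (Fin (m+1)) (Fin (m+1)) ℝ :=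
  fun i j => u m a i * u m b j

lemma u_castSucc {m : ℕ} (a c : Fin m) :
    u m a (Fin.castSucc c) = if c = a then 1 else 0 := by
  unfold u
  rw [if_neg (Fin.castSucc_lt_last c).ne]
  simp [Fin.castSucc_inj]

lemma u_last {m : ℕ} (a : Fin m) : u m a (Fin.last m) = -1 := by
  unfold u
  rw [if_neg (Fin.castSucc_lt_last a).ne', if_pos rfl]
  norm_num

lemma abs_u_le {m : ℕ} (a : Fin m) (i : Fin (m+1)) : |u m a i| ≤ 1 := by
  unfold u; split_ifs <;> norm_num

lemma sum_u {m : ℕ} (a : Fin m) : ∑ i, u m a i = 0 := by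
  rw [Fin.sum_univ_castSucc]
  simp [u_castSucc, u_last, Finset.sum_ite_eq]

lemma row_combo {m : ℕ} {r : Fin (m+1) → ℝ} (hr : ∑ i, r i = 0) (j : Fin (m+1)) :
    ∑ b : Fin m, r (Fin.castSucc b) * u m b j = r j := by
  induction j using Fin.lastCases with
  | last =>
    simp only [u_last, mul_neg, mul_one, Finset.sum_neg_distrib]
    rw [Fin.sum_univ_castSucc] at hr
    linarith
  | cast d =>
    simp only [u_castSucc]
    simp [mul_ite, Finset.sum_ite_eq]

lemma combo {m : ℕ} {X : Matrix (Fin (m+1)) (Fin (m+1)) ℝ}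
    (hr : ∀ i, ∑ j, X i j = 0) (hc : ∀ j, ∑ i, X i j = 0) :
    X = ∑ ab : Fin m × Fin m, X (Fin.castSucc ab.1) (Fin.castSucc ab.2) • Emat m ab.1 ab.2 := by
  funext i j
  rw [Matrix.sum_apply]
  rw [Fintype.sum_prod_type]
  have step1 : ∀ a : Fin m,
      ∑ b : Fin m, (X (Fin.castSucc a) (Fin.castSucc b) • Emat m a b) i j
        = X (Fin.castSucc a) j * u m a i := by
    intro a
    have := row_combo (hr (Fin.castSucc a)) j
    calc ∑ b : Fin m, (X (Fin.castSucc a) (Fin.castSucc b) • Emat m a b) i j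
        = (∑ b : Fin m, X (Fin.castSucc a) (Fin.castSucc b) * u m b j) * u m a i := by
          rw [Finset.sum_mul]
          refine Finset.sum_congr rfl fun b _ => ?_
          simp [Emat, Matrix.smul_apply]
          ring
      _ = X (Fin.castSucc a) j * u m a i := by rw [this]
  rw [Finset.sum_congr rfl fun a _ => step1 a]
  exact (row_combo (hc j) i).symm

lemma Emat_linearIndependent (m : ℕ) :
    LinearIndependent ℝ (fun ab : Fin m × Fin m => Emat m ab.1 ab.2) := by
  rw [Fintype.linearIndependent_iff]
  intro g hg ab
  have h := congrFun (congrFun hg (Fin.castSucc ab.1)) (Fin.castSucc ab.2)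
  rw [Matrix.sum_apply] at h
  rw [Fintype.sum_prod_type] at h
  simp only [Matrix.smul_apply, Emat, u_castSucc, smul_eq_mul] at h
  rw [Finset.sum_eq_single ab.1] at h
  · rw [Finset.sum_eq_single ab.2] at h
    · simpa using h
    · intro b _ hb; simp [Ne.symm hb]
    · simp
  · intro a _ ha
    apply Finset.sum_eq_zero
    intro b _
    simp [Ne.symm ha]
  · simp

lemma pathSum_affine {m : ℕ} (c ε : ℝ) (E : Matrix (Fin (m+1)) (Fin (m+1)) ℝ)
    {p : ℕ → ℕ × ℕ} (hp : IsLatticePath (m+1) p) :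
    pathSum (fun i j => c + ε * E i j) p = (2*m+1) * c + ε * pathSum E p := by
  unfold pathSum
  have hrange : 2 * (m+1) - 1 = 2*m+1 := by omega
  rw [hrange]
  have key : ∀ i ∈ Finset.range (2*m+1),
      ent (fun i j => c + ε * E i j) (p i) = c + ε * ent E (p i) := by
    intro i hi
    rw [Finset.mem_range] at hi
    have hlt := path_lt hp (by omega) i (by omega)
    have hc : (p i).1 < m+1 ∧ (p i).2 < m+1 := ⟨hlt.1, hlt.2⟩
    simp only [ent, dif_pos hc]
  rw [Finset.sum_congr rfl key, Finset.sum_add_distrib, ← Finset.mul_sum]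
  simp [Finset.sum_const, Finset.card_range]

lemma ind_sum_le {n : ℕ} {p : ℕ → ℕ × ℕ} (hp : IsLatticePath n p) (hn : 1 ≤ n) (q : ℕ × ℕ) :
    ∑ i ∈ Finset.range (2*n-1), (if p i = q then (1:ℝ) else 0) ≤ 1 := by
  rw [Finset.sum_boole]
  have hcard : (Finset.filter (fun i => p i = q) (Finset.range (2*n-1))).card ≤ 1 := by
    apply Finset.card_le_one.mpr
    intro i hi j hj
    simp only [Finset.mem_filter, Finset.mem_range] at hi hj
    have hi2 := path_coord_sum hp i (by omega)
    have hj2 := path_coord_sum hp j (by omega)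
    rw [hi.2] at hi2; rw [hj.2] at hj2; omega
  exact_mod_cast hcard

lemma ent_Emat_le {m : ℕ} (a b : Fin m) (q : ℕ × ℕ) :
    ent (Emat m a b) q
      ≤ (if q = ((a:ℕ),(b:ℕ)) then 1 else 0) + (if q = (m,m) then 1 else 0) := by
  unfold ent
  split
  case isFalse h => split_ifs <;> norm_num
  case isTrue h =>
    have hi1 : ((⟨q.1, h.1⟩ : Fin (m+1)) = Fin.castSucc a) ↔ q.1 = (a:ℕ) := by
      simp [Fin.ext_iff]
    have hi2 : ((⟨q.1, h.1⟩ : Fin (m+1)) = Fin.last m) ↔ q.1 = m := by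
      simp [Fin.ext_iff]
    have hj1 : ((⟨q.2, h.2⟩ : Fin (m+1)) = Fin.castSucc b) ↔ q.2 = (b:ℕ) := by
      simp [Fin.ext_iff]
    have hj2 : ((⟨q.2, h.2⟩ : Fin (m+1)) = Fin.last m) ↔ q.2 = m := by
      simp [Fin.ext_iff]
    have hq1 : (q = ((a:ℕ),(b:ℕ))) ↔ (q.1 = (a:ℕ) ∧ q.2 = (b:ℕ)) := by
      rw [Prod.ext_iff]
    have hq2 : (q = ((m:ℕ),(m:ℕ))) ↔ (q.1 = m ∧ q.2 = m) := by
      rw [Prod.ext_iff]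
    have ha : (a:ℕ) < m := a.isLt
    have hb : (b:ℕ) < m := b.isLt
    unfold Emat u
    simp only [hi1, hi2, hj1, hj2, hq1, hq2]
    split_ifs <;> norm_num <;> omega

lemma pathSum_Emat_le {m : ℕ} (a b : Fin m) {p : ℕ → ℕ × ℕ} (hp : IsLatticePath (m+1) p) :
    pathSum (Emat m a b) p ≤ 2 := by
  unfold pathSum
  calc ∑ i ∈ Finset.range (2*(m+1)-1), ent (Emat m a b) (p i)
      ≤ ∑ i ∈ Finset.range (2*(m+1)-1),
          ((if p i = ((a:ℕ),(b:ℕ)) then (1:ℝ) else 0) + (if p i = (m,m) then 1 else 0)) :=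
        Finset.sum_le_sum fun i _ => ent_Emat_le a b (p i)
    _ = (∑ i ∈ Finset.range (2*(m+1)-1), (if p i = ((a:ℕ),(b:ℕ)) then (1:ℝ) else 0))
        + ∑ i ∈ Finset.range (2*(m+1)-1), (if p i = ((m:ℕ),(m:ℕ)) then (1:ℝ) else 0) :=
        Finset.sum_add_distrib
    _ ≤ 1 + 1 := add_le_add (ind_sum_le hp (by omega) _) (ind_sum_le hp (by omega) _)
    _ = 2 := by norm_num

lemma mem_C {m k : ℕ} (hk : 2 ≤ k) :
    InRestrictedBirkhoff (m+1) k (fun _ _ => 1/(m+1) : Matrix (Fin (m+1)) (Fin (m+1)) ℝ) := by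
  have hM : (0:ℝ) < (m:ℝ) + 1 := by positivity
  refine ⟨fun i j => by positivity, fun i => ?_, fun j => ?_, fun p hp => ?_⟩
  · simp [Finset.sum_const]
    field_simp
  · simp [Finset.sum_const]
    field_simp
  · have h0 : (fun _ _ => 1/(m+1) : Matrix (Fin (m+1)) (Fin (m+1)) ℝ)
        = fun i j => 1/((m:ℝ)+1) + 0 * (0 : Matrix (Fin (m+1)) (Fin (m+1)) ℝ) i j := by
      funext i j; push_cast; ring
    rw [h0, pathSum_affine _ _ _ hp]
    have hk2 : (2:ℝ) ≤ k := by exact_mod_cast hk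
    rw [zero_mul, add_zero]
    rw [mul_one_div, div_le_iff₀ hM]
    nlinarith

lemma mem_X {m k : ℕ} (hk : 2 ≤ k) (a b : Fin m) :
    InRestrictedBirkhoff (m+1) k
      (fun i j => 1/((m:ℝ)+1) + (1/(2*((m:ℝ)+1))) * Emat m a b i j) := by
  have hM : (0:ℝ) < (m:ℝ) + 1 := by positivity
  have habs : ∀ i j, |Emat m a b i j| ≤ 1 := by
    intro i j
    unfold Emat
    rw [abs_mul]
    calc |u m a i| * |u m b j| ≤ 1 * 1 :=
      mul_le_mul (abs_u_le a i) (abs_u_le b j) (abs_nonneg _) zero_le_one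
    _ = 1 := by norm_num
  refine ⟨fun i j => ?_, fun i => ?_, fun j => ?_, fun p hp => ?_⟩
  · have h1 : -1 ≤ Emat m a b i j := neg_le_of_abs_le (habs i j)
    have h2 : (0:ℝ) < 2*((m:ℝ)+1) := by positivity
    have h3 : 1/(2*((m:ℝ)+1)) * Emat m a b i j ≥ 1/(2*((m:ℝ)+1)) * (-1) := by
      apply mul_le_mul_of_nonneg_left h1 (by positivity)
    have h4 : 1/((m:ℝ)+1) - 1/(2*((m:ℝ)+1)) ≥ 0 := by
      rw [ge_iff_le, sub_nonneg, div_le_div_iff₀ h2 hM]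
      nlinarith
    linarith
  · rw [Finset.sum_add_distrib, ← Finset.mul_sum]
    have : ∑ j, Emat m a b i j = u m a i * ∑ j, u m b j := by
      rw [Finset.mul_sum]; rfl
    rw [this, sum_u]
    simp [Finset.sum_const]
    field_simp
  · rw [Finset.sum_add_distrib, ← Finset.mul_sum]
    have : ∑ i, Emat m a b i j = (∑ i, u m a i) * u m b j := by
      rw [Finset.sum_mul]; rfl
    rw [this, sum_u]
    simp [Finset.sum_const]
    field_simp
  · rw [pathSum_affine _ _ _ hp]
    have hk2 : (2:ℝ) ≤ k := by exact_mod_cast hk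
    have hE := pathSum_Emat_le a b hp
    have h2 : (0:ℝ) < 1/(2*((m:ℝ)+1)) := by positivity
    have h3 : (1/(2*((m:ℝ)+1))) * pathSum (Emat m a b) p ≤ (1/(2*((m:ℝ)+1))) * 2 :=
      mul_le_mul_of_nonneg_left hE (le_of_lt h2)
    have h4 : (2*(m:ℝ)+1) * (1/((m:ℝ)+1)) + (1/(2*((m:ℝ)+1))) * 2 = 2 := by
      field_simp; ring
    linarith

/-- For `n ≥ 3` and `2 ≤ k ≤ n`, the polytope `B_n^k` has dimension `n² - 2n + 1`. -/
theorem dim_restrictedBirkhoff (n k : ℕ) (hn : 3 ≤ n) (hk : 2 ≤ k) (hkn : k ≤ n) :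
    Module.finrank ℝ
      (affineSpan ℝ {X : Matrix (Fin n) (Fin n) ℝ | InRestrictedBirkhoff n k X}).direction
      = n ^ 2 - 2 * n + 1 := by
  obtain ⟨m, rfl⟩ : ∃ m, n = m + 1 := ⟨n - 1, by omega⟩
  set s := {X : Matrix (Fin (m+1)) (Fin (m+1)) ℝ | InRestrictedBirkhoff (m+1) k X} with hs
  have hdir : (affineSpan ℝ s).direction
      = Submodule.span ℝ (Set.range (fun ab : Fin m × Fin m => Emat m ab.1 ab.2)) := by
    rw [direction_affineSpan]
    apply le_antisymm
    · rw [vectorSpan_def]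
      apply Submodule.span_le.mpr
      rintro v ⟨X, hX, Y, hY, rfl⟩
      show X -ᵥ Y ∈ (Submodule.span ℝ (Set.range fun ab : Fin m × Fin m => Emat m ab.1 ab.2) : Set _)
      have hr : ∀ i, ∑ j, (X -ᵥ Y) i j = 0 := by
        intro i
        simp only [vsub_eq_sub, Matrix.sub_apply, Finset.sum_sub_distrib,
          hX.2.1 i, hY.2.1 i, sub_self]
      have hc : ∀ j, ∑ i, (X -ᵥ Y) i j = 0 := by
        intro j
        simp only [vsub_eq_sub, Matrix.sub_apply, Finset.sum_sub_distrib,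
          hX.2.2.1 j, hY.2.2.1 j, sub_self]
      rw [SetLike.mem_coe, combo hr hc]
      exact Submodule.sum_mem _ fun ab _ =>
        Submodule.smul_mem _ _ (Submodule.subset_span ⟨ab, rfl⟩)
    · apply Submodule.span_le.mpr
      rintro _ ⟨ab, rfl⟩
      show Emat m ab.1 ab.2 ∈ (vectorSpan ℝ s : Set _)
      have h1 : (fun i j => 1/((m:ℝ)+1) + (1/(2*((m:ℝ)+1))) * Emat m ab.1 ab.2 i j) ∈ s :=
        mem_X hk ab.1 ab.2
      have h2 : (fun _ _ => 1/(m+1) : Matrix (Fin (m+1)) (Fin (m+1)) ℝ) ∈ s := mem_C hk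
      have h3 := vsub_mem_vectorSpan ℝ h1 h2
      have h4 : Emat m ab.1 ab.2 = (2*((m:ℝ)+1)) •
          ((fun i j => 1/((m:ℝ)+1) + (1/(2*((m:ℝ)+1))) * Emat m ab.1 ab.2 i j)
            -ᵥ (fun _ _ => 1/(m+1) : Matrix (Fin (m+1)) (Fin (m+1)) ℝ)) := by
        have hM : ((m:ℝ)+1) ≠ 0 := by positivity
        funext i j
        simp only [vsub_eq_sub, Matrix.sub_apply, Matrix.smul_apply, Pi.smul_apply, Pi.sub_apply, smul_eq_mul]
        push_cast
        field_simp
        ring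
      rw [SetLike.mem_coe, h4]
      exact Submodule.smul_mem _ _ h3
  rw [hdir, finrank_span_eq_card (Emat_linearIndependent m)]
  simp only [Fintype.card_prod, Fintype.card_fin]
  have hm : 2 ≤ m := by omega
  have hle : 2*(m+1) ≤ (m+1)^2 := by nlinarith
  zify [hle]
  ring
end
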